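/- Let φ_v(N) = Σ_{d|N} μ(d)/d^{1+v}. For complex numbers s, v with Re s > 1, the Dirichlet series Σ_{m=1}^∞ μ(m)(m,N)^s / m^{1+v+s} equals φ_v(N) / (ζ(1+s+v) · φ_{s+v}(N)), where (m,N) denotes gcd(m,N). -/

import Mathlib

open Finset Complex ArithmeticFunction

/-- `φ_v(N) = Σ_{d|N} μ(d)/d^{1+v}`. -/
noncomputable def phiGen (v : ℂ) (N : ℕ) : ℂ :=
  ∑ d ∈ N.divisors, (moebius d : ℂ) / (d : ℂ) ^ ((1 : ℂ) + v)

/-- The arithmetic function `n ↦ 1 / n^c`. -/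
noncomputable def cpowDivAF (c : ℂ) : ArithmeticFunction ℂ :=
  ⟨fun n => if n = 0 then 0 else 1 / (n : ℂ) ^ c, by simp⟩

lemma cpowDivAF_apply (c : ℂ) (n : ℕ) :
    cpowDivAF c n = if n = 0 then 0 else 1 / (n : ℂ) ^ c := rfl

lemma cpowDivAF_isMultiplicative (c : ℂ) : (cpowDivAF c).IsMultiplicative := by
  rw [ArithmeticFunction.IsMultiplicative.iff_ne_zero]
  refine ⟨by simp [cpowDivAF_apply], ?_⟩
  intro m n hm hn _
  rw [cpowDivAF_apply, cpowDivAF_apply, cpowDivAF_apply, if_neg hm, if_neg hn,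
    if_neg (Nat.mul_ne_zero hm hn), Nat.cast_mul, Complex.natCast_mul_natCast_cpow]
  ring

lemma squarefree_prod_primes {S : Finset ℕ} (hS : ∀ p ∈ S, p.Prime) :
    Squarefree (∏ p ∈ S, p) := by
  classical
  induction S using Finset.induction with
  | empty => simpa using squarefree_one
  | insert _ _ ha ih =>
    rename_i a s
    rw [Finset.prod_insert ha]
    have hs : ∀ p ∈ s, p.Prime := fun p hp => hS p (Finset.mem_insert_of_mem hp)
    have hap : a.Prime := hS a (Finset.mem_insert_self a s)
    have hcop : Nat.Coprime a (∏ p ∈ s, p) := by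
      apply Nat.Coprime.prod_right
      intro p hp
      exact (Nat.coprime_primes hap (hs p hp)).mpr (by rintro rfl; exact ha hp)
    exact (Nat.squarefree_mul hcop).mpr ⟨hap.squarefree, ih hs⟩

lemma phiGen_eq_prod (c : ℂ) {N : ℕ} (hN : 0 < N) :
    phiGen c N = ∏ p ∈ N.primeFactors, (1 - (p : ℂ) ^ (-(1 + c))) := by
  classical
  set r : ℕ := ∏ p ∈ N.primeFactors, p with hr
  have hprimes : ∀ p ∈ N.primeFactors, p.Prime := fun p hp => Nat.prime_of_mem_primeFactors hp
  have hrsq : Squarefree r := squarefree_prod_primes hprimes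
  have hrF : r.primeFactors = N.primeFactors := Nat.primeFactors_prod hprimes
  have key := ArithmeticFunction.IsMultiplicative.prodPrimeFactors_one_sub_of_squarefree
    (cpowDivAF (1 + c)) (cpowDivAF_isMultiplicative (1 + c)) hrsq
  have hfilter : N.divisors.filter Squarefree = r.divisors.filter Squarefree := by
    ext d
    simp only [Finset.mem_filter, Nat.mem_divisors, hN.ne', hrsq.ne_zero, ne_eq,
      not_false_eq_true, and_true]
    constructor
    · rintro ⟨hd, hsq⟩
      refine ⟨?_, hsq⟩
      calc d = ∏ p ∈ d.primeFactors, p := (Nat.prod_primeFactors_of_squarefree hsq).symm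
        _ ∣ r := Finset.prod_dvd_prod_of_subset _ _ _ (Nat.primeFactors_mono hd hN.ne')
    · rintro ⟨hd, hsq⟩
      exact ⟨hd.trans (Nat.prod_primeFactors_dvd N), hsq⟩
  have step1' : phiGen c N = ∑ d ∈ N.divisors.filter Squarefree,
      (moebius d : ℂ) / (d : ℂ) ^ ((1 : ℂ) + c) := by
    rw [phiGen]
    symm
    apply Finset.sum_filter_of_ne
    intro d _ hne
    by_contra hsq
    rw [ArithmeticFunction.moebius_eq_zero_of_not_squarefree hsq] at hne
    simp at hne
  rw [step1', hfilter]
  have step2 : r.divisors.filter Squarefree = r.divisors := by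
    apply Finset.filter_true_of_mem
    intro d hd
    exact hrsq.squarefree_of_dvd (Nat.mem_divisors.mp hd).1
  rw [step2]
  have step3 : ∑ d ∈ r.divisors, (moebius d : ℂ) / (d : ℂ) ^ ((1 : ℂ) + c)
      = ∑ d ∈ r.divisors, (moebius d : ℂ) * cpowDivAF (1 + c) d := by
    apply Finset.sum_congr rfl
    intro d hd
    rw [cpowDivAF_apply, if_neg (Nat.pos_of_mem_divisors hd).ne', mul_one_div]
  rw [step3, ← key, hrF]
  apply Finset.prod_congr rfl
  intro p hp
  rw [cpowDivAF_apply, if_neg (hprimes p hp).ne_zero, Complex.cpow_neg, one_div]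

lemma term_mult {h : ℕ → ℂ} (h1 : h 1 = 1)
    (hm : ∀ {m n : ℕ}, Nat.Coprime m n → h (m * n) = h m * h n) (w : ℂ) :
    ∀ {m n : ℕ}, Nat.Coprime m n → LSeries.term h w (m * n)
      = LSeries.term h w m * LSeries.term h w n := by
  intro m n hmn
  rcases eq_or_ne m 0 with rfl | hm0
  · obtain rfl : n = 1 := Nat.coprime_zero_left n |>.mp hmn
    simp [LSeries.term]
  rcases eq_or_ne n 0 with rfl | hn0
  · obtain rfl : m = 1 := Nat.coprime_zero_right m |>.mp hmn
    simp [LSeries.term]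
  rw [LSeries.term_of_ne_zero (Nat.mul_ne_zero hm0 hn0), LSeries.term_of_ne_zero hm0,
    LSeries.term_of_ne_zero hn0, hm hmn, Nat.cast_mul, Complex.natCast_mul_natCast_cpow,
    div_mul_div_comm]

lemma term_one {h : ℕ → ℂ} (h1 : h 1 = 1) (w : ℂ) : LSeries.term h w 1 = 1 := by
  rw [LSeries.term_of_ne_zero one_ne_zero, h1, Nat.cast_one, Complex.one_cpow, div_one]

lemma tsum_term_prime {h : ℕ → ℂ} (h1 : h 1 = 1) {p : ℕ} (hp : p.Prime)
    (h0 : ∀ e, 2 ≤ e → h (p ^ e) = 0) (w : ℂ) :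
    ∑' e : ℕ, LSeries.term h w (p ^ e) = 1 + h p / (p : ℂ) ^ w := by
  rw [tsum_eq_sum (s := {0, 1}) ?side]
  · rw [Finset.sum_pair (by norm_num : (0:ℕ) ≠ 1), pow_zero, pow_one, term_one h1,
      LSeries.term_of_ne_zero hp.ne_zero]
  case side =>
    intro e he
    have h2 : 2 ≤ e := by
      rcases e with _ | _ | e
      · simp at he
      · simp at he
      · omega
    rw [LSeries.term_of_ne_zero (pow_ne_zero e hp.ne_zero), h0 e h2, zero_div]

lemma summable_norm_term {h : ℕ → ℂ} (C : ℝ) (hC : ∀ n : ℕ, n ≠ 0 → ‖h n‖ ≤ C)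
    {w : ℂ} (hw : 1 < w.re) : Summable (fun n : ℕ => ‖LSeries.term h w n‖) := by
  have hsum : Summable (fun n : ℕ => C * (1 / (n : ℝ) ^ w.re)) :=
    (Real.summable_one_div_nat_rpow.mpr hw).mul_left C
  apply Summable.of_nonneg_of_le (fun n => norm_nonneg _) _ hsum
  intro n
  rcases eq_or_ne n 0 with rfl | hn0
  · simp [LSeries.term_zero, Real.zero_rpow (by positivity : (0:ℝ) < w.re).ne']
  · rw [LSeries.norm_term_eq, if_neg hn0, mul_one_div]
    gcongr
    exact hC n hn0

lemma aux_one_sub_prime_cpow_ne_zero {p : ℕ} (hp : p.Prime) {c : ℂ} (hc : 0 < c.re) :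
    1 - (p : ℂ) ^ (-c) ≠ 0 := by
  intro hzero
  have h1 : ((p : ℂ) ^ (-c)) = 1 := by linear_combination -hzero
  have h2 : ‖(p : ℂ) ^ (-c)‖ < 1 := by
    rw [Complex.norm_natCast_cpow_of_pos hp.pos, neg_re]
    apply Real.rpow_lt_one_of_one_lt_of_neg
    · exact_mod_cast hp.one_lt
    · linarith
  rw [h1, norm_one] at h2
  exact lt_irrefl 1 h2

theorem moebius_gcd_dirichlet_series (s v : ℂ) (N : ℕ) (hN : 0 < N)
    (hs : 1 < s.re) (hsv : 0 < (s + v).re) :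
    ∑' m : ℕ+, (moebius m : ℂ) * ((Nat.gcd m N : ℂ) ^ s) / (m : ℂ) ^ ((1 : ℂ) + v + s)
      = phiGen v N / (riemannZeta (1 + s + v) * phiGen (s + v) N) := by
  classical
  set w : ℂ := 1 + v + s with hw_def
  have hw : 1 < w.re := by
    have h1 : w.re = 1 + v.re + s.re := by simp [hw_def]
    have h2 : (s + v).re = s.re + v.re := by simp
    rw [h2] at hsv
    rw [h1]; linarith
  have hNne : N ≠ 0 := hN.ne'
  set h : ℕ → ℂ := fun n => (moebius n : ℂ) * (Nat.gcd n N : ℂ) ^ s with hh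
  have h1 : h 1 = 1 := by
    simp [hh, Nat.gcd_one_left, ArithmeticFunction.moebius_apply_one]
  have hmul : ∀ {m n : ℕ}, Nat.Coprime m n → h (m * n) = h m * h n := by
    intro m n hmn
    have hmu : moebius (m * n) = moebius m * moebius n :=
      isMultiplicative_moebius.map_mul_of_coprime hmn
    have hgcd : Nat.gcd (m * n) N = Nat.gcd m N * Nat.gcd n N := by
      rw [Nat.gcd_comm, Nat.Coprime.gcd_mul _ hmn, Nat.gcd_comm N m, Nat.gcd_comm N n]
    simp only [hh, hmu, hgcd, Nat.cast_mul, Int.cast_mul, Complex.natCast_mul_natCast_cpow]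
    ring
  have hmu_norm : ∀ n : ℕ, ‖((moebius n : ℤ) : ℂ)‖ ≤ 1 := by
    intro n
    rw [Complex.norm_intCast]
    exact_mod_cast abs_moebius_le_one
  have hCbound : ∀ n : ℕ, n ≠ 0 → ‖h n‖ ≤ (N : ℝ) ^ s.re := by
    intro n hn
    have hgpos : 0 < Nat.gcd n N := Nat.gcd_pos_of_pos_right n hN
    have hb2 : ‖((Nat.gcd n N : ℕ) : ℂ) ^ s‖ = ((Nat.gcd n N : ℕ) : ℝ) ^ s.re :=
      Complex.norm_natCast_cpow_of_pos hgpos s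
    have hb3 : ((Nat.gcd n N : ℕ) : ℝ) ^ s.re ≤ (N : ℝ) ^ s.re := by
      apply Real.rpow_le_rpow (Nat.cast_nonneg _) _ (by linarith)
      exact_mod_cast Nat.le_of_dvd hN (Nat.gcd_dvd_right n N)
    calc ‖h n‖ = ‖((moebius n : ℤ) : ℂ)‖ * ‖((Nat.gcd n N : ℕ) : ℂ) ^ s‖ := norm_mul _ _
      _ ≤ 1 * ((N : ℝ) ^ s.re) :=
          mul_le_mul (hmu_norm n) (hb2 ▸ hb3) (norm_nonneg _) zero_le_one
      _ = (N : ℝ) ^ s.re := one_mul _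
  have hsum : Summable (fun n : ℕ => ‖LSeries.term h w n‖) :=
    summable_norm_term _ hCbound hw
  have hEuler : HasProd (fun p : Nat.Primes => ∑' e : ℕ, LSeries.term h w ((p : ℕ) ^ e))
      (∑' n : ℕ, LSeries.term h w n) :=
    EulerProduct.eulerProduct_hasProd (term_one h1 w) (term_mult h1 hmul w) hsum
      (LSeries.term_zero h w)
  have hzero : ∀ p : Nat.Primes, ∀ e : ℕ, 2 ≤ e → h ((p : ℕ) ^ e) = 0 := by
    intro p e he
    have : moebius ((p : ℕ) ^ e) = 0 := by
      rw [moebius_apply_prime_pow p.2 (by omega : e ≠ 0), if_neg (by omega)]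
    simp [hh, this]
  have hlocal : ∀ p : Nat.Primes, ∑' e : ℕ, LSeries.term h w ((p : ℕ) ^ e)
      = 1 + h p / ((p : ℕ) : ℂ) ^ w := fun p => tsum_term_prime h1 p.2 (hzero p) w
  have hA : HasProd (fun p : Nat.Primes => 1 + h p / ((p : ℕ) : ℂ) ^ w)
      (∑' n : ℕ, LSeries.term h w n) := by
    rw [show (fun p : Nat.Primes => 1 + h p / ((p : ℕ) : ℂ) ^ w)
        = fun p : Nat.Primes => ∑' e : ℕ, LSeries.term h w ((p : ℕ) ^ e) from
      funext fun p => (hlocal p).symm]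
    exact hEuler
  -- Euler product for the Möbius function alone
  set μc : ℕ → ℂ := fun n => ((moebius n : ℤ) : ℂ) with hμc
  have hμ1 : μc 1 = 1 := by simp [hμc]
  have hμmul : ∀ {m n : ℕ}, Nat.Coprime m n → μc (m * n) = μc m * μc n := by
    intro m n hmn
    simp [hμc, isMultiplicative_moebius.map_mul_of_coprime hmn]
  have hμsum : Summable (fun n : ℕ => ‖LSeries.term μc w n‖) :=
    summable_norm_term 1 (fun n _ => hmu_norm n) hw
  have hμzero : ∀ p : Nat.Primes, ∀ e : ℕ, 2 ≤ e → μc ((p : ℕ) ^ e) = 0 := by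
    intro p e he
    simp [hμc, moebius_apply_prime_pow p.2 (by omega : e ≠ 0), if_neg (by omega : ¬ e = 1)]
  have hμEuler : HasProd (fun p : Nat.Primes => ∑' e : ℕ, LSeries.term μc w ((p : ℕ) ^ e))
      (∑' n : ℕ, LSeries.term μc w n) :=
    EulerProduct.eulerProduct_hasProd (term_one hμ1 w) (term_mult hμ1 hμmul w) hμsum
      (LSeries.term_zero μc w)
  have hζval : (∑' n : ℕ, LSeries.term μc w n) = (riemannZeta w)⁻¹ := by
    have hz := ArithmeticFunction.LSeries_zeta_mul_Lseries_moebius (s := w) hw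
    rw [ArithmeticFunction.LSeries_zeta_eq_riemannZeta hw] at hz
    exact eq_inv_of_mul_eq_one_right hz
  have hμlocal : ∀ p : Nat.Primes,
      ∑' e : ℕ, LSeries.term μc w ((p : ℕ) ^ e) = 1 - ((p : ℕ) : ℂ) ^ (-w) := by
    intro p
    rw [tsum_term_prime hμ1 p.2 (hμzero p) w]
    simp only [hμc, moebius_apply_prime p.2]
    rw [Complex.cpow_neg]
    push_cast
    ring
  have hB : HasProd (fun p : Nat.Primes => 1 - ((p : ℕ) : ℂ) ^ (-w)) ((riemannZeta w)⁻¹) := by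
    rw [show (fun p : Nat.Primes => 1 - ((p : ℕ) : ℂ) ^ (-w))
        = fun p : Nat.Primes => ∑' e : ℕ, LSeries.term μc w ((p : ℕ) ^ e) from
      funext fun p => (hμlocal p).symm, ← hζval]
    exact hμEuler
  -- the finite correction factor
  set F : ℕ → ℂ := fun q =>
    if q ∣ N then (1 - (q : ℂ) ^ (-(1 + v))) / (1 - (q : ℂ) ^ (-w)) else 1 with hF
  set S : Finset Nat.Primes := N.primeFactors.subtype Nat.Prime with hS
  have hGfin : ∀ p : Nat.Primes, p ∉ S → F (p : ℕ) = 1 := by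
    intro p hp
    simp only [hF]
    rw [if_neg]
    intro hdvd
    exact hp (Finset.mem_subtype.mpr (Nat.mem_primeFactors.mpr ⟨p.2, hdvd, hNne⟩))
  have hG : HasProd (fun p : Nat.Primes => F (p : ℕ)) (∏ p ∈ S, F (p : ℕ)) :=
    hasProd_prod_of_ne_finset_one hGfin
  have hne : ∀ p : Nat.Primes, 1 - ((p : ℕ) : ℂ) ^ (-w) ≠ 0 := fun p =>
    aux_one_sub_prime_cpow_ne_zero p.2 (by linarith)
  have hpoint : ∀ p : Nat.Primes,
      1 + h p / ((p : ℕ) : ℂ) ^ w = (1 - ((p : ℕ) : ℂ) ^ (-w)) * F (p : ℕ) := by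
    intro p
    have hpne : ((p : ℕ) : ℂ) ≠ 0 := Nat.cast_ne_zero.mpr p.2.ne_zero
    by_cases hdvd : (p : ℕ) ∣ N
    · have hkey : h p = -(((p : ℕ) : ℂ) ^ s) := by
        simp only [hh, Nat.gcd_eq_left hdvd, moebius_apply_prime p.2]
        push_cast
        ring
      have hdiv : ((p : ℕ) : ℂ) ^ s / ((p : ℕ) : ℂ) ^ w = ((p : ℕ) : ℂ) ^ (-(1 + v)) := by
        rw [div_eq_mul_inv, ← Complex.cpow_neg, ← Complex.cpow_add _ _ hpne,
          show s + -w = -(1 + v) by rw [hw_def]; ring]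
      have hFp : F (p : ℕ) = (1 - ((p : ℕ) : ℂ) ^ (-(1 + v))) / (1 - ((p : ℕ) : ℂ) ^ (-w)) := by
        simp only [hF]
        rw [if_pos hdvd]
      rw [hkey, hFp, mul_comm, div_mul_cancel₀ _ (hne p), neg_div, ← sub_eq_add_neg, hdiv]
    · have hg1 : Nat.gcd (p : ℕ) N = 1 := (Nat.Prime.coprime_iff_not_dvd p.2).mpr hdvd
      have hkey : h p = -1 := by
        simp only [hh, hg1, moebius_apply_prime p.2]
        push_cast
        rw [Complex.one_cpow]
        ring
      have hFp : F (p : ℕ) = 1 := by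
        simp only [hF]
        rw [if_neg hdvd]
      rw [hkey, hFp, mul_one, Complex.cpow_neg]
      ring
  have hBG := hB.mul hG
  rw [show (fun p : Nat.Primes => (1 - ((p : ℕ) : ℂ) ^ (-w)) * F (p : ℕ))
      = fun p : Nat.Primes => 1 + h p / ((p : ℕ) : ℂ) ^ w from
    funext fun p => (hpoint p).symm] at hBG
  have hmain : (∑' n : ℕ, LSeries.term h w n)
      = (riemannZeta w)⁻¹ * ∏ p ∈ S, F (p : ℕ) := hA.unique hBG
  have hprodS : ∏ p ∈ S, F (p : ℕ) = ∏ q ∈ N.primeFactors, F q := by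
    refine Finset.prod_bij (fun (p : Nat.Primes) _ => (p : ℕ)) ?_ ?_ ?_ ?_
    · intro a ha
      rw [hS] at ha
      exact Finset.mem_subtype.mp ha
    · intro a _ b _ hab
      exact Subtype.ext hab
    · intro q hq
      exact ⟨⟨q, Nat.prime_of_mem_primeFactors hq⟩, by
        rw [hS]; exact Finset.mem_subtype.mpr hq, rfl⟩
    · intro a _
      rfl
  have hprod1 : ∏ q ∈ N.primeFactors, F q = phiGen v N / phiGen (s + v) N := by
    have e1 : phiGen v N = ∏ q ∈ N.primeFactors, (1 - (q : ℂ) ^ (-(1 + v))) :=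
      phiGen_eq_prod v hN
    have e2 : phiGen (s + v) N = ∏ q ∈ N.primeFactors, (1 - (q : ℂ) ^ (-w)) := by
      rw [phiGen_eq_prod (s + v) hN]
      apply Finset.prod_congr rfl
      intro q _
      rw [show -(1 + (s + v)) = -w by rw [hw_def]; ring]
    rw [e1, e2, ← Finset.prod_div_distrib]
    apply Finset.prod_congr rfl
    intro q hq
    simp only [hF]
    rw [if_pos (Nat.dvd_of_mem_primeFactors hq)]
  have hterm : ∀ m : ℕ+, (moebius m : ℂ) * ((Nat.gcd m N : ℂ) ^ s) / ((m : ℕ) : ℂ) ^ w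
      = LSeries.term h w (m : ℕ) := by
    intro m
    rw [LSeries.term_of_ne_zero m.pos.ne' h w]
  have hlhs : ∑' m : ℕ+, (moebius m : ℂ) * ((Nat.gcd m N : ℂ) ^ s) / ((m : ℕ) : ℂ) ^ w
      = ∑' n : ℕ, LSeries.term h w n := by
    rw [tsum_congr hterm]
    apply Function.Injective.tsum_eq PNat.coe_injective
    intro n hn
    have hn0 : n ≠ 0 := by
      intro h0
      rw [h0] at hn
      exact hn (LSeries.term_zero h w)
    exact ⟨⟨n, Nat.pos_of_ne_zero hn0⟩, rfl⟩
  rw [hlhs, hmain, hprodS, hprod1,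
    show riemannZeta (1 + s + v) = riemannZeta w by rw [hw_def]; ring_nf,
    div_eq_mul_inv, div_eq_mul_inv, mul_inv]
  ring
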